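/- Let B = ℍ[ℚ, c₁, c₂] be a quaternion algebra over ℚ, let O be a subring of B such that for every x ∈ O the reduced trace trd(x) = x + x̄ is an integer, and let p be a prime. Suppose α₁, α₂ ∈ O, set β₁ = 2α₁ − trd(α₁) and β₂ = 2α₂ − trd(α₂), and assume that nrd(β₁)·nrd(β₂) − (1/4)·trd(β₁·β̄₂)² = 4p. Then the element α = (1/2)·β₁·β̄₂ − (1/4)·trd(β₁·β̄₂) belongs to O, and satisfies trd(α) = 0 and nrd(α) = p. -/

import Mathlib

open scoped Quaternion
set_option maxHeartbeats 2000000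

/-- Let `O` be a subring of a quaternion algebra over `ℚ` all of whose elements have integral
reduced trace, let `p` be prime, and for `α₁, α₂ ∈ O` set `βᵢ = 2αᵢ - trd(αᵢ)`.  If
`nrd(β₁)·nrd(β₂) - (1/4)·trd(β₁·β̄₂)² = 4p`, then
`α = (1/2)·β₁·β̄₂ - (1/4)·trd(β₁·β̄₂)` lies in `O`, has reduced trace `0`, and reduced
norm `p`. -/
theorem stmt_5 (c₁ c₂ : ℚ) (O : Subring ℍ[ℚ, c₁, c₂])
    (hO : ∀ x ∈ O, ∃ n : ℤ, x + star x = (n : ℍ[ℚ, c₁, c₂]))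
    (p : ℕ) (hp : p.Prime) (α₁ α₂ : ℍ[ℚ, c₁, c₂]) (h₁ : α₁ ∈ O) (h₂ : α₂ ∈ O)
    (β₁ β₂ : ℍ[ℚ, c₁, c₂])
    (hβ₁ : β₁ = 2 * α₁ - (α₁ + star α₁)) (hβ₂ : β₂ = 2 * α₂ - (α₂ + star α₂))
    (hdet : (β₁ * star β₁).re * (β₂ * star β₂).re
        - (1 / 4) * (2 * (β₁ * star β₂).re) ^ 2 = 4 * p) :
    let α : ℍ[ℚ, c₁, c₂] := ((1 : ℚ) / 2) • (β₁ * star β₂)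
        - (((1 : ℚ) / 4 * (2 * (β₁ * star β₂).re) : ℚ) : ℍ[ℚ, c₁, c₂])
    α ∈ O ∧ α + star α = 0 ∧ α * star α = ((p : ℚ) : ℍ[ℚ, c₁, c₂]) := by
  intro α
  have hb1 : β₁ = α₁ - star α₁ := by rw [hβ₁, two_mul]; abel
  have hb2 : β₂ = α₂ - star α₂ := by rw [hβ₂, two_mul]; abel
  have key : α = α₂ * α₁ - α₁ * α₂ := by
    show ((1 : ℚ) / 2) • (β₁ * star β₂)
        - (((1 : ℚ) / 4 * (2 * (β₁ * star β₂).re) : ℚ) : ℍ[ℚ, c₁, c₂])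
      = α₂ * α₁ - α₁ * α₂
    rw [hb1, hb2]
    ext <;>
      simp [QuaternionAlgebra.re_mul, QuaternionAlgebra.imI_mul,
        QuaternionAlgebra.imJ_mul, QuaternionAlgebra.imK_mul, QuaternionAlgebra.re_ofNat,
        QuaternionAlgebra.imI_ofNat, QuaternionAlgebra.imJ_ofNat, QuaternionAlgebra.imK_ofNat] <;> ring
  refine ⟨key ▸ O.sub_mem (O.mul_mem h₂ h₁) (O.mul_mem h₁ h₂), ?_, ?_⟩
  · show ((1 : ℚ) / 2) • (β₁ * star β₂)
        - (((1 : ℚ) / 4 * (2 * (β₁ * star β₂).re) : ℚ) : ℍ[ℚ, c₁, c₂])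
      + star (((1 : ℚ) / 2) • (β₁ * star β₂)
        - (((1 : ℚ) / 4 * (2 * (β₁ * star β₂).re) : ℚ) : ℍ[ℚ, c₁, c₂])) = 0
    ext <;>
      simp [QuaternionAlgebra.re_mul, QuaternionAlgebra.imI_mul,
        QuaternionAlgebra.imJ_mul, QuaternionAlgebra.imK_mul, QuaternionAlgebra.re_ofNat,
        QuaternionAlgebra.imI_ofNat, QuaternionAlgebra.imJ_ofNat, QuaternionAlgebra.imK_ofNat] <;> ring
  · show (((1 : ℚ) / 2) • (β₁ * star β₂)
        - (((1 : ℚ) / 4 * (2 * (β₁ * star β₂).re) : ℚ) : ℍ[ℚ, c₁, c₂]))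
      * star (((1 : ℚ) / 2) • (β₁ * star β₂)
        - (((1 : ℚ) / 4 * (2 * (β₁ * star β₂).re) : ℚ) : ℍ[ℚ, c₁, c₂]))
      = ((p : ℚ) : ℍ[ℚ, c₁, c₂])
    simp only [QuaternionAlgebra.re_mul, QuaternionAlgebra.re_star,
      QuaternionAlgebra.imI_star, QuaternionAlgebra.imJ_star,
      QuaternionAlgebra.imK_star] at hdet
    ext
    case re =>
      simp [QuaternionAlgebra.re_mul, QuaternionAlgebra.re_ofNat, QuaternionAlgebra.imI_ofNat,
        QuaternionAlgebra.imJ_ofNat, QuaternionAlgebra.imK_ofNat]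
      linear_combination (1/4 : ℚ) * hdet
    all_goals
      simp [QuaternionAlgebra.re_mul, QuaternionAlgebra.imI_mul,
        QuaternionAlgebra.imJ_mul, QuaternionAlgebra.imK_mul, QuaternionAlgebra.re_ofNat,
        QuaternionAlgebra.imI_ofNat, QuaternionAlgebra.imJ_ofNat, QuaternionAlgebra.imK_ofNat] <;> ring
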